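/- arXiv:1509.00708 — 2 statements merged into one kernel-verified Lean document; each statement's English description precedes it below -/
import Mathlib

section
/- For periodic curl-free fields, line integrals across the periodicity cell coincide with the volume average: let F : ℝ³ → ℝ³ be a C¹ vector field which is ℤ³-periodic (F(y + k) = F(y) for all k ∈ ℤ³) and satisfies curl F = 0 on all of ℝ³. Then for every point (a, b) ∈ ℝ², ∫₀¹ F₃(a, b, t) dt = ∫_{[0,1]³} F₃(y) dy, i.e. the line integral of F along any straight segment parallel to e₃ connecting two points identified by periodicity equals the third component of the cell average of F. -/
open MeasureTheory

noncomputable section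

/-- `V3` is the Euclidean space `ℝ³`, modelled as functions `Fin 3 → ℝ`. -/
abbrev V3 := Fin 3 → ℝ

/-- Partial derivative in the `i`-th coordinate direction of a real-valued function. -/
def pdR (i : Fin 3) (f : V3 → ℝ) (x : V3) : ℝ := fderiv ℝ f x (Pi.single i 1)

/-- Curl of a real vector field on `ℝ³`. -/
def curlR (v : V3 → V3) (x : V3) : V3 :=
  ![pdR 1 (fun y => v y 2) x - pdR 2 (fun y => v y 1) x,
    pdR 2 (fun y => v y 0) x - pdR 0 (fun y => v y 2) x,
    pdR 0 (fun y => v y 1) x - pdR 1 (fun y => v y 0) x]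

lemma line_hasDerivAt {f : V3 → ℝ} (hf : Differentiable ℝ f) (x : V3) (i : Fin 3) (s : ℝ) :
    HasDerivAt (fun r : ℝ => f (x + r • (Pi.single i 1 : V3)))
      (pdR i f (x + s • (Pi.single i 1 : V3))) s := by
  have h1 : HasDerivAt (fun r : ℝ => x + r • (Pi.single i 1 : V3)) (Pi.single i 1) s := by
    simpa using ((hasDerivAt_id s).smul_const (Pi.single i 1 : V3)).const_add x
  have h2 := (hf _).hasFDerivAt.comp_hasDerivAt s h1
  simpa [pdR, Function.comp_def] using h2

lemma pdR_continuous {f : V3 → ℝ} (hf : ContDiff ℝ 1 f) (i : Fin 3) : Continuous (pdR i f) :=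
  (hf.continuous_fderiv one_ne_zero).clm_apply continuous_const

lemma continuous_vec3 {α : Type*} [TopologicalSpace α] {f g h : α → ℝ} (hf : Continuous f)
    (hg : Continuous g) (hh : Continuous h) : Continuous fun x => (![f x, g x, h x] : V3) := by
  apply continuous_pi; intro i; fin_cases i <;> simpa

/-- FTC along the third coordinate. -/
lemma ftc_coord {f : V3 → ℝ} (hf : ContDiff ℝ 1 f) (a b : ℝ) :
    ∫ t in (0:ℝ)..1, pdR 2 f ![a, b, t] = f ![a, b, 1] - f ![a, b, 0] := by
  have hv : ∀ t : ℝ, (![a, b, t] : V3) = ![a, b, 0] + t • (Pi.single 2 1 : V3) := by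
    intro t; funext i; fin_cases i <;> simp [Pi.single_apply]
  have hd : ∀ t ∈ Set.uIcc (0:ℝ) 1,
      HasDerivAt (fun t : ℝ => f (![a, b, 0] + t • (Pi.single 2 1 : V3)))
        (pdR 2 f (![a, b, 0] + t • (Pi.single 2 1 : V3))) t :=
    fun t _ => line_hasDerivAt (hf.differentiable one_ne_zero) _ 2 t
  have hcont : Continuous fun t : ℝ => pdR 2 f (![a, b, 0] + t • (Pi.single 2 1 : V3)) := by
    apply (pdR_continuous hf 2).comp
    have : (fun t : ℝ => (![a, b, 0] : V3) + t • (Pi.single 2 1 : V3))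
        = fun t : ℝ => (![a, b, t] : V3) := by funext t; rw [← hv]
    rw [this]
    exact continuous_vec3 continuous_const continuous_const continuous_id
  have := intervalIntegral.integral_eq_sub_of_hasDerivAt hd (hcont.intervalIntegrable 0 1)
  simp only [← hv] at this
  exact this

lemma hasDerivAt_paramA (F : V3 → V3) (hF : ContDiff ℝ 1 F) (b a : ℝ) :
    HasDerivAt (fun x : ℝ => ∫ t in (0:ℝ)..1, F ![x, b, t] 2)
      (∫ t in (0:ℝ)..1, pdR 0 (fun y => F y 2) ![a, b, t]) a := by
  have hF3 : ContDiff ℝ 1 (fun y => F y 2) := (contDiff_pi.mp hF) 2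
  have hvec : ∀ x t : ℝ, (![x, b, t] : V3) = ![0, b, t] + x • (Pi.single 0 1 : V3) := by
    intro x t; funext i; fin_cases i <;> simp [Pi.single_apply]
  have hcontv : ∀ x : ℝ, Continuous fun t : ℝ => (![x, b, t] : V3) := fun x =>
    continuous_vec3 continuous_const continuous_const continuous_id
  have hcontp : Continuous fun p : ℝ × ℝ => pdR 0 (fun y => F y 2) ![p.1, b, p.2] :=
    (pdR_continuous hF3 0).comp
      (continuous_vec3 continuous_fst continuous_const continuous_snd)
  obtain ⟨C, hC⟩ := ((isCompact_Icc (a := a - 1) (b := a + 1)).prod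
    (isCompact_Icc (a := (0:ℝ)) (b := 1))).exists_bound_of_continuousOn hcontp.continuousOn
  have H := intervalIntegral.hasDerivAt_integral_of_dominated_loc_of_deriv_le
    (F := fun x t => F ![x, b, t] 2)
    (F' := fun x t => pdR 0 (fun y => F y 2) ![x, b, t]) (x₀ := a)
    (bound := fun _ => C) (a := (0:ℝ)) (b := (1:ℝ)) (μ := volume) (s := Metric.ball a 1) (Metric.ball_mem_nhds a one_pos)
    (Filter.Eventually.of_forall fun x =>
      (((continuous_apply (2 : Fin 3)).comp hF.continuous).comp (hcontv x)).aestronglyMeasurable)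
    ((((continuous_apply (2 : Fin 3)).comp hF.continuous).comp (hcontv a)).intervalIntegrable 0 1)
    (((pdR_continuous hF3 0).comp (hcontv a)).aestronglyMeasurable)
    (Filter.Eventually.of_forall fun t ht x hx => by
      have hx' : x ∈ Set.Icc (a - 1) (a + 1) := by
        rw [Real.ball_eq_Ioo] at hx
        exact ⟨hx.1.le, hx.2.le⟩
      have ht' : t ∈ Set.Icc (0:ℝ) 1 := by
        rw [Set.uIoc_of_le (by norm_num : (0:ℝ) ≤ 1)] at ht
        exact ⟨ht.1.le, ht.2⟩
      exact hC (x, t) ⟨hx', ht'⟩)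
    (intervalIntegrable_const)
    (Filter.Eventually.of_forall fun t ht x hx => by
      have := line_hasDerivAt (hF3.differentiable one_ne_zero) ![0, b, t] 0 x
      simp only [← hvec] at this
      exact this)
  exact H.2

lemma hasDerivAt_paramB (F : V3 → V3) (hF : ContDiff ℝ 1 F) (a b : ℝ) :
    HasDerivAt (fun x : ℝ => ∫ t in (0:ℝ)..1, F ![a, x, t] 2)
      (∫ t in (0:ℝ)..1, pdR 1 (fun y => F y 2) ![a, b, t]) b := by
  have hF3 : ContDiff ℝ 1 (fun y => F y 2) := (contDiff_pi.mp hF) 2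
  have hvec : ∀ x t : ℝ, (![a, x, t] : V3) = ![a, 0, t] + x • (Pi.single 1 1 : V3) := by
    intro x t; funext i; fin_cases i <;> simp [Pi.single_apply]
  have hcontv : ∀ x : ℝ, Continuous fun t : ℝ => (![a, x, t] : V3) := fun x =>
    continuous_vec3 continuous_const continuous_const continuous_id
  have hcontp : Continuous fun p : ℝ × ℝ => pdR 1 (fun y => F y 2) ![a, p.1, p.2] :=
    (pdR_continuous hF3 1).comp
      (continuous_vec3 continuous_const continuous_fst continuous_snd)
  obtain ⟨C, hC⟩ := ((isCompact_Icc (a := b - 1) (b := b + 1)).prod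
    (isCompact_Icc (a := (0:ℝ)) (b := 1))).exists_bound_of_continuousOn hcontp.continuousOn
  have H := intervalIntegral.hasDerivAt_integral_of_dominated_loc_of_deriv_le
    (F := fun x t => F ![a, x, t] 2)
    (F' := fun x t => pdR 1 (fun y => F y 2) ![a, x, t]) (x₀ := b)
    (bound := fun _ => C) (a := (0:ℝ)) (b := (1:ℝ)) (μ := volume) (s := Metric.ball b 1) (Metric.ball_mem_nhds b one_pos)
    (Filter.Eventually.of_forall fun x =>
      (((continuous_apply (2 : Fin 3)).comp hF.continuous).comp (hcontv x)).aestronglyMeasurable)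
    ((((continuous_apply (2 : Fin 3)).comp hF.continuous).comp (hcontv b)).intervalIntegrable 0 1)
    (((pdR_continuous hF3 1).comp (hcontv b)).aestronglyMeasurable)
    (Filter.Eventually.of_forall fun t ht x hx => by
      have hx' : x ∈ Set.Icc (b - 1) (b + 1) := by
        rw [Real.ball_eq_Ioo] at hx
        exact ⟨hx.1.le, hx.2.le⟩
      have ht' : t ∈ Set.Icc (0:ℝ) 1 := by
        rw [Set.uIoc_of_le (by norm_num : (0:ℝ) ≤ 1)] at ht
        exact ⟨ht.1.le, ht.2⟩
      exact hC (x, t) ⟨hx', ht'⟩)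
    (intervalIntegrable_const)
    (Filter.Eventually.of_forall fun t ht x hx => by
      have := line_hasDerivAt (hF3.differentiable one_ne_zero) ![a, 0, t] 1 x
      simp only [← hvec] at this
      exact this)
  exact H.2

/-- For periodic curl-free `C¹` fields, the line integral along a segment parallel to `e₃`
connecting two points identified by periodicity equals the cell average of the
third component. -/
theorem line_integral_eq_cell_average
    (F : V3 → V3) (hF : ContDiff ℝ 1 F)
    (hper : ∀ (y : V3) (k : Fin 3 → ℤ), F (y + fun i => (k i : ℝ)) = F y)
    (hcurl : ∀ y, curlR F y = 0)
    (a b : ℝ) :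
    (∫ t in Set.Ioo (0 : ℝ) 1, F ![a, b, t] 2)
      = ∫ y in Set.univ.pi fun _ : Fin 3 => Set.Ioo (0 : ℝ) 1, F y 2 := by
  classical
  have hF3 : ContDiff ℝ 1 (fun y => F y 2) := (contDiff_pi.mp hF) 2
  have hF0 : ContDiff ℝ 1 (fun y => F y 0) := (contDiff_pi.mp hF) 0
  have hF1 : ContDiff ℝ 1 (fun y => F y 1) := (contDiff_pi.mp hF) 1
  -- consequences of curl-freeness
  have pd02 : ∀ y, pdR 0 (fun y => F y 2) y = pdR 2 (fun y => F y 0) y := by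
    intro y
    have h := congrFun (hcurl y) 1
    simp [curlR] at h
    linarith
  have pd12 : ∀ y, pdR 1 (fun y => F y 2) y = pdR 2 (fun y => F y 1) y := by
    intro y
    have h := congrFun (hcurl y) 0
    simp [curlR] at h
    linarith
  -- periodicity along the third axis
  have hper3 : ∀ x y : ℝ, F ![x, y, 1] = F ![x, y, 0] := by
    intro x y
    have h := hper ![x, y, 0] (Pi.single 2 1)
    have hv : (![x, y, 0] + fun i => (((Pi.single 2 1 : Fin 3 → ℤ)) i : ℝ))
        = (![x, y, 1] : V3) := by
      funext i; fin_cases i <;> simp [Pi.single_apply]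
    rw [hv] at h
    exact h
  -- the line integral has zero derivative in both horizontal directions
  have derivA : ∀ y x : ℝ,
      HasDerivAt (fun x : ℝ => ∫ t in (0:ℝ)..1, F ![x, y, t] 2) 0 x := by
    intro y x
    have H := hasDerivAt_paramA F hF y x
    have h0 : (∫ t in (0:ℝ)..1, pdR 0 (fun y => F y 2) ![x, y, t]) = 0 := by
      have he : (fun t : ℝ => pdR 0 (fun y => F y 2) ![x, y, t])
          = fun t : ℝ => pdR 2 (fun y => F y 0) ![x, y, t] := funext fun t => pd02 _
      rw [he, ftc_coord hF0 x y, hper3 x y, sub_self]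
    rwa [h0] at H
  have derivB : ∀ x y : ℝ,
      HasDerivAt (fun y : ℝ => ∫ t in (0:ℝ)..1, F ![x, y, t] 2) 0 y := by
    intro x y
    have H := hasDerivAt_paramB F hF x y
    have h0 : (∫ t in (0:ℝ)..1, pdR 1 (fun y => F y 2) ![x, y, t]) = 0 := by
      have he : (fun t : ℝ => pdR 1 (fun y => F y 2) ![x, y, t])
          = fun t : ℝ => pdR 2 (fun y => F y 1) ![x, y, t] := funext fun t => pd12 _
      rw [he, ftc_coord hF1 x y, hper3 x y, sub_self]
    rwa [h0] at H
  -- hence the line integral is constant in the base point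
  have hconst : ∀ x y : ℝ,
      (∫ t in (0:ℝ)..1, F ![x, y, t] 2) = ∫ t in (0:ℝ)..1, F ![a, b, t] 2 := by
    intro x y
    have h1 : (∫ t in (0:ℝ)..1, F ![x, y, t] 2) = ∫ t in (0:ℝ)..1, F ![a, y, t] 2 :=
      is_const_of_deriv_eq_zero (fun z => (derivA y z).differentiableAt)
        (fun z => (derivA y z).deriv) x a
    have h2 : (∫ t in (0:ℝ)..1, F ![a, y, t] 2) = ∫ t in (0:ℝ)..1, F ![a, b, t] 2 :=
      is_const_of_deriv_eq_zero (fun z => (derivB a z).differentiableAt)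
        (fun z => (derivB a z).deriv) y b
    rw [h1, h2]
  have hIoo : ∀ x y : ℝ,
      (∫ t in Set.Ioo (0:ℝ) 1, F ![x, y, t] 2) = ∫ t in (0:ℝ)..1, F ![x, y, t] 2 := by
    intro x y
    rw [intervalIntegral.integral_of_le (by norm_num : (0:ℝ) ≤ 1),
      integral_Ioc_eq_integral_Ioo]
  have hconst' : ∀ x y : ℝ,
      (∫ t in Set.Ioo (0:ℝ) 1, F ![x, y, t] 2)
        = ∫ t in Set.Ioo (0:ℝ) 1, F ![a, b, t] 2 := by
    intro x y; rw [hIoo, hIoo]; exact hconst x y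
  -- Fubini on the unit cell
  set S2 : Set (Fin 2 → ℝ) := Set.univ.pi fun _ : Fin 2 => Set.Ioo (0:ℝ) 1 with hS2def
  set S1 : Set (Fin 1 → ℝ) := Set.univ.pi fun _ : Fin 1 => Set.Ioo (0:ℝ) 1 with hS1def
  -- innermost reduction : Fin 1
  have inner1 : ∀ s u : ℝ,
      (∫ w in S1, F ![s, u, w 0] 2) = ∫ t in Set.Ioo (0:ℝ) 1, F ![s, u, t] 2 := by
    intro s u
    have hpre1 : S1 = (MeasurableEquiv.funUnique (Fin 1) ℝ) ⁻¹' Set.Ioo (0:ℝ) 1 := by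
      ext w
      simp [hS1def, MeasurableEquiv.funUnique, Unique.forall_iff]
    have H := (volume_preserving_funUnique (Fin 1) ℝ).setIntegral_preimage_emb
      (MeasurableEquiv.funUnique (Fin 1) ℝ).measurableEmbedding
      (fun t : ℝ => F ![s, u, t] 2) (Set.Ioo (0:ℝ) 1)
    rw [hpre1]
    rw [← H]
    refine integral_congr_ae (ae_of_all _ fun w => ?_)
    congr 1
  -- middle reduction : Fin 2
  have inner2 : ∀ s : ℝ,
      (∫ w in S2, F ![s, w 0, w 1] 2)
        = ∫ u in Set.Ioo (0:ℝ) 1, ∫ t in Set.Ioo (0:ℝ) 1, F ![s, u, t] 2 := by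
    intro s
    have hpre2 : S2 = (MeasurableEquiv.piFinSuccAbove (fun _ : Fin 2 => ℝ) 0) ⁻¹'
        ((Set.Ioo (0:ℝ) 1) ×ˢ S1) := by
      ext w
      simp only [hS2def, hS1def, Set.mem_pi, Set.mem_univ, forall_true_left, Set.mem_preimage,
        MeasurableEquiv.piFinSuccAbove_apply, Set.mem_prod, Fin.zero_succAbove]
      constructor
      · intro h; exact ⟨h 0, fun j => h j.succ⟩
      · rintro ⟨h0, hs⟩ i
        match i with
        | 0 => exact h0
        | ⟨j+1, hj⟩ => exact hs ⟨j, by omega⟩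
    have H := (volume_preserving_piFinSuccAbove (fun _ : Fin 2 => ℝ) 0).setIntegral_preimage_emb
      (MeasurableEquiv.piFinSuccAbove (fun _ : Fin 2 => ℝ) 0).measurableEmbedding
      (fun z : ℝ × (Fin 1 → ℝ) => F ![s, z.1, z.2 0] 2) ((Set.Ioo (0:ℝ) 1) ×ˢ S1)
    have hgc : Continuous fun z : ℝ × (Fin 1 → ℝ) => F ![s, z.1, z.2 0] 2 :=
      ((continuous_apply (2 : Fin 3)).comp hF.continuous).comp
        (continuous_vec3 continuous_const continuous_fst
          ((continuous_apply (0 : Fin 1)).comp continuous_snd))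
    have hK : IsCompact ((Set.Icc (0:ℝ) 1) ×ˢ (Set.univ.pi fun _ : Fin 1 => Set.Icc (0:ℝ) 1)) :=
      isCompact_Icc.prod (isCompact_univ_pi fun _ => isCompact_Icc)
    have hint := (hgc.continuousOn.integrableOn_compact (μ := volume) hK).mono_set
      (Set.prod_mono Set.Ioo_subset_Icc_self (Set.pi_mono fun i _ => Set.Ioo_subset_Icc_self))
    rw [Measure.volume_eq_prod] at hint
    calc (∫ w in S2, F ![s, w 0, w 1] 2)
        = ∫ w in (MeasurableEquiv.piFinSuccAbove (fun _ : Fin 2 => ℝ) 0) ⁻¹'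
            ((Set.Ioo (0:ℝ) 1) ×ˢ S1),
            F ![s, ((MeasurableEquiv.piFinSuccAbove (fun _ : Fin 2 => ℝ) 0) w).1,
              ((MeasurableEquiv.piFinSuccAbove (fun _ : Fin 2 => ℝ) 0) w).2 0] 2 := by
          rw [← hpre2]
          exact integral_congr_ae (ae_of_all _ fun w => by congr 1)
      _ = ∫ z in (Set.Ioo (0:ℝ) 1) ×ˢ S1, F ![s, z.1, z.2 0] 2 := H
      _ = ∫ u in Set.Ioo (0:ℝ) 1, ∫ w in S1, F ![s, u, w 0] 2 := by
          rw [Measure.volume_eq_prod]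
          exact setIntegral_prod _ hint
      _ = ∫ u in Set.Ioo (0:ℝ) 1, ∫ t in Set.Ioo (0:ℝ) 1, F ![s, u, t] 2 := by
          simp only [inner1]
  -- outermost reduction : Fin 3
  have hpre3 : (Set.univ.pi fun _ : Fin 3 => Set.Ioo (0:ℝ) 1)
      = (MeasurableEquiv.piFinSuccAbove (fun _ : Fin 3 => ℝ) 0) ⁻¹'
        ((Set.Ioo (0:ℝ) 1) ×ˢ S2) := by
    ext w
    simp only [hS2def, Set.mem_pi, Set.mem_univ, forall_true_left, Set.mem_preimage,
      MeasurableEquiv.piFinSuccAbove_apply, Set.mem_prod, Fin.zero_succAbove]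
    constructor
    · intro h; exact ⟨h 0, fun j => h j.succ⟩
    · rintro ⟨h0, hs⟩ i
      match i with
      | 0 => exact h0
      | ⟨j+1, hj⟩ => exact hs ⟨j, by omega⟩
  have H3 := (volume_preserving_piFinSuccAbove (fun _ : Fin 3 => ℝ) 0).setIntegral_preimage_emb
    (MeasurableEquiv.piFinSuccAbove (fun _ : Fin 3 => ℝ) 0).measurableEmbedding
    (fun z : ℝ × (Fin 2 → ℝ) => F ![z.1, z.2 0, z.2 1] 2) ((Set.Ioo (0:ℝ) 1) ×ˢ S2)
  have hgc3 : Continuous fun z : ℝ × (Fin 2 → ℝ) => F ![z.1, z.2 0, z.2 1] 2 :=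
    ((continuous_apply (2 : Fin 3)).comp hF.continuous).comp
      (continuous_vec3 continuous_fst
        ((continuous_apply (0 : Fin 2)).comp continuous_snd)
        ((continuous_apply (1 : Fin 2)).comp continuous_snd))
  have hK3 : IsCompact ((Set.Icc (0:ℝ) 1) ×ˢ (Set.univ.pi fun _ : Fin 2 => Set.Icc (0:ℝ) 1)) :=
    isCompact_Icc.prod (isCompact_univ_pi fun _ => isCompact_Icc)
  have hint3 := (hgc3.continuousOn.integrableOn_compact (μ := volume) hK3).mono_set
    (Set.prod_mono Set.Ioo_subset_Icc_self (Set.pi_mono fun i _ => Set.Ioo_subset_Icc_self))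
  rw [Measure.volume_eq_prod] at hint3
  symm
  calc (∫ y in Set.univ.pi fun _ : Fin 3 => Set.Ioo (0:ℝ) 1, F y 2)
      = ∫ w in (MeasurableEquiv.piFinSuccAbove (fun _ : Fin 3 => ℝ) 0) ⁻¹'
          ((Set.Ioo (0:ℝ) 1) ×ˢ S2),
          F ![((MeasurableEquiv.piFinSuccAbove (fun _ : Fin 3 => ℝ) 0) w).1,
            ((MeasurableEquiv.piFinSuccAbove (fun _ : Fin 3 => ℝ) 0) w).2 0,
            ((MeasurableEquiv.piFinSuccAbove (fun _ : Fin 3 => ℝ) 0) w).2 1] 2 := by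
        rw [← hpre3]
        exact integral_congr_ae (ae_of_all _ fun w => by congr 1; funext i; fin_cases i <;> rfl)
    _ = ∫ z in (Set.Ioo (0:ℝ) 1) ×ˢ S2, F ![z.1, z.2 0, z.2 1] 2 := H3
    _ = ∫ s in Set.Ioo (0:ℝ) 1, ∫ w in S2, F ![s, w 0, w 1] 2 := by
        rw [Measure.volume_eq_prod]
        exact setIntegral_prod _ hint3
    _ = ∫ s in Set.Ioo (0:ℝ) 1, ∫ u in Set.Ioo (0:ℝ) 1,
          ∫ t in Set.Ioo (0:ℝ) 1, F ![s, u, t] 2 := by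
        simp only [inner2]
    _ = ∫ s in Set.Ioo (0:ℝ) 1, ∫ u in Set.Ioo (0:ℝ) 1,
          ∫ t in Set.Ioo (0:ℝ) 1, F ![a, b, t] 2 := by
        simp only [hconst']
    _ = ∫ t in Set.Ioo (0:ℝ) 1, F ![a, b, t] 2 := by
        simp [Real.volume_Ioo]
end
end

section
/- Dirichlet energy comparison for cut-off modified potentials: let Y := (0,1)³, fix j ∈ {1,2,3}, and let Θ : ℝ³ → ℝ be a C¹ function with |Θ(y)| ≤ M for all y ∈ Y and A := ∫_Y |∇Θ(y)|² dy < ∞. Then for all C¹ functions Υ, Υ* : ℝ³ → ℝ with 0 ≤ Υ ≤ 1 and 0 ≤ Υ* ≤ 1 everywhere, setting d := ( ∫_Y (|1 − Υ|² + |∇Υ|²) )^{1/2} + ( ∫_Y (|1 − Υ*|² + |∇Υ*|²) )^{1/2}, the comparison function Θ̃(y) := Θ(y) Υ(y) − y_j (1 − Υ*(y)) satisfies ∫_Y |∇Θ̃(y)|² dy ≤ A + (M + 2) · d · ( 2√A + (M + 2) d ). In particular, if d ≤ δ for some δ ≤ 1, then ∫_Y |∇Θ̃|² ≤ ∫_Y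 |∇Θ|² + C δ with the constant C := (M + 2)(2√A + M + 2) depending only on M and A. -/
open MeasureTheory

noncomputable section

/-- The open unit cell `Y = (0,1)³`. -/
def Ycell : Set V3 := Set.univ.pi fun _ : Fin 3 => Set.Ioo (0 : ℝ) 1

namespace DEC

lemma Ycell_subset : Ycell ⊆ Set.univ.pi fun _ : Fin 3 => Set.Icc (0:ℝ) 1 :=
  Set.pi_mono fun _ _ => Set.Ioo_subset_Icc_self

lemma Ycell_meas : MeasurableSet Ycell :=
  (isOpen_set_pi Set.finite_univ fun _ _ => isOpen_Ioo).measurableSet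

lemma integrableOn_Ycell {f : V3 → ℝ} (hf : Continuous f) : IntegrableOn f Ycell volume :=
  (hf.continuousOn.integrableOn_compact (isCompact_univ_pi fun _ => isCompact_Icc)).mono_set
    Ycell_subset

lemma pdR_cont {f : V3 → ℝ} (hf : ContDiff ℝ 1 f) (i : Fin 3) : Continuous (pdR i f) :=
  (hf.continuous_fderiv one_ne_zero).clm_apply continuous_const

lemma finiteMeasureY : IsFiniteMeasure (volume.restrict Ycell) := by
  constructor
  rw [Measure.restrict_apply_univ]
  exact lt_of_le_of_lt (measure_mono Ycell_subset)
    (isCompact_univ_pi fun _ => isCompact_Icc).measure_lt_top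

lemma memL2 {f : V3 → ℝ} (hf : Continuous f) :
    MemLp f (ENNReal.ofReal 2) (volume.restrict Ycell) := by
  have := finiteMeasureY
  obtain ⟨C, hC⟩ := (isCompact_univ_pi fun _ : Fin 3 => isCompact_Icc
    (a := (0:ℝ)) (b := 1)).exists_bound_of_continuousOn hf.continuousOn
  exact MemLp.of_bound hf.aestronglyMeasurable C
    ((ae_restrict_iff' Ycell_meas).2 (ae_of_all _ fun x hx => hC x (Ycell_subset hx)))

lemma int_CS {f g : V3 → ℝ} (hf : Continuous f) (hg : Continuous g)
    (hf0 : ∀ y, 0 ≤ f y) (hg0 : ∀ y, 0 ≤ g y) :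
    ∫ y in Ycell, f y * g y
      ≤ Real.sqrt (∫ y in Ycell, f y ^ 2) * Real.sqrt (∫ y in Ycell, g y ^ 2) := by
  have h := integral_mul_le_Lp_mul_Lq_of_nonneg (μ := volume.restrict Ycell)
    Real.HolderConjugate.two_two
    (ae_of_all _ hf0) (ae_of_all _ hg0) (memL2 hf) (memL2 hg)
  calc ∫ y in Ycell, f y * g y
      ≤ (∫ y in Ycell, f y ^ 2) ^ ((1:ℝ)/2) * (∫ y in Ycell, g y ^ 2) ^ ((1:ℝ)/2) := by
        simpa [Real.rpow_natCast] using h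
    _ = _ := by rw [Real.sqrt_eq_rpow, Real.sqrt_eq_rpow]

lemma sum_sq_cont (a : Fin 3 → V3 → ℝ) (ha : ∀ i, Continuous (a i)) :
    Continuous (fun y => ∑ i, (a i y) ^ 2) :=
  continuous_finset_sum _ fun i _ => (ha i).pow 2

lemma mink (a b : Fin 3 → V3 → ℝ) (ha : ∀ i, Continuous (a i)) (hb : ∀ i, Continuous (b i)) :
    Real.sqrt (∫ y in Ycell, ∑ i, (a i y + b i y) ^ 2)
      ≤ Real.sqrt (∫ y in Ycell, ∑ i, (a i y) ^ 2)
        + Real.sqrt (∫ y in Ycell, ∑ i, (b i y) ^ 2) := by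
  set F : V3 → ℝ := fun y => Real.sqrt (∑ i, (a i y) ^ 2) with hF
  set G : V3 → ℝ := fun y => Real.sqrt (∑ i, (b i y) ^ 2) with hG
  have hFc : Continuous F := (sum_sq_cont a ha).sqrt
  have hGc : Continuous G := (sum_sq_cont b hb).sqrt
  have hFsq : ∀ y, F y ^ 2 = ∑ i, (a i y) ^ 2 := fun y =>
    Real.sq_sqrt (Finset.sum_nonneg fun i _ => sq_nonneg _)
  have hGsq : ∀ y, G y ^ 2 = ∑ i, (b i y) ^ 2 := fun y =>
    Real.sq_sqrt (Finset.sum_nonneg fun i _ => sq_nonneg _)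
  have hpt : ∀ y, ∑ i, (a i y + b i y) ^ 2
      ≤ (∑ i, (a i y) ^ 2) + 2 * (F y * G y) + ∑ i, (b i y) ^ 2 := by
    intro y
    have hcs : ∑ i, a i y * b i y ≤ F y * G y := by
      have h1 := Finset.sum_mul_sq_le_sq_mul_sq Finset.univ (fun i => a i y) (fun i => b i y)
      calc ∑ i, a i y * b i y ≤ |∑ i, a i y * b i y| := le_abs_self _
        _ = Real.sqrt ((∑ i, a i y * b i y) ^ 2) := (Real.sqrt_sq_eq_abs _).symm
        _ ≤ Real.sqrt ((∑ i, (a i y) ^ 2) * ∑ i, (b i y) ^ 2) := Real.sqrt_le_sqrt h1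
        _ = F y * G y := Real.sqrt_mul (Finset.sum_nonneg fun i _ => sq_nonneg _) _
    have hexp : ∑ i, (a i y + b i y) ^ 2
        = (∑ i, (a i y) ^ 2) + 2 * (∑ i, a i y * b i y) + ∑ i, (b i y) ^ 2 := by
      rw [Fin.sum_univ_three, Fin.sum_univ_three, Fin.sum_univ_three, Fin.sum_univ_three]
      ring
    rw [hexp]; linarith
  have hIab : IntegrableOn (fun y => ∑ i, (a i y + b i y) ^ 2) Ycell volume :=
    integrableOn_Ycell (sum_sq_cont _ fun i => (ha i).add (hb i))
  have hIa : IntegrableOn (fun y => ∑ i, (a i y) ^ 2) Ycell volume :=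
    integrableOn_Ycell (sum_sq_cont a ha)
  have hIb : IntegrableOn (fun y => ∑ i, (b i y) ^ 2) Ycell volume :=
    integrableOn_Ycell (sum_sq_cont b hb)
  have hIFG : IntegrableOn (fun y => F y * G y) Ycell volume :=
    integrableOn_Ycell (hFc.mul hGc)
  have hI2FG : IntegrableOn (fun y => 2 * (F y * G y)) Ycell volume := hIFG.const_mul 2
  have hI12 : IntegrableOn (fun y => (∑ i, (a i y) ^ 2) + 2 * (F y * G y)) Ycell volume :=
    hIa.add hI2FG
  have hI123 : IntegrableOn
      (fun y => (∑ i, (a i y) ^ 2) + 2 * (F y * G y) + ∑ i, (b i y) ^ 2) Ycell volume :=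
    hI12.add hIb
  have hint : (∫ y in Ycell, ∑ i, (a i y + b i y) ^ 2)
      ≤ (∫ y in Ycell, ∑ i, (a i y) ^ 2) + 2 * (∫ y in Ycell, F y * G y)
        + ∫ y in Ycell, ∑ i, (b i y) ^ 2 := by
    have := setIntegral_mono_on hIab hI123 Ycell_meas (fun y _ => hpt y)
    calc (∫ y in Ycell, ∑ i, (a i y + b i y) ^ 2)
        ≤ ∫ y in Ycell, ((∑ i, (a i y) ^ 2) + 2 * (F y * G y) + ∑ i, (b i y) ^ 2) := this
      _ = _ := by
          rw [integral_add hI12 hIb, integral_add hIa hI2FG, MeasureTheory.integral_const_mul]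
  have hcsint : (∫ y in Ycell, F y * G y)
      ≤ Real.sqrt (∫ y in Ycell, ∑ i, (a i y) ^ 2)
        * Real.sqrt (∫ y in Ycell, ∑ i, (b i y) ^ 2) := by
    have := int_CS hFc hGc (fun y => Real.sqrt_nonneg _) (fun y => Real.sqrt_nonneg _)
    simpa only [hFsq, hGsq] using this
  have hA0 : 0 ≤ ∫ y in Ycell, ∑ i, (a i y) ^ 2 :=
    setIntegral_nonneg Ycell_meas fun y _ => Finset.sum_nonneg fun i _ => sq_nonneg _
  have hB0 : 0 ≤ ∫ y in Ycell, ∑ i, (b i y) ^ 2 :=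
    setIntegral_nonneg Ycell_meas fun y _ => Finset.sum_nonneg fun i _ => sq_nonneg _
  have key : (∫ y in Ycell, ∑ i, (a i y + b i y) ^ 2)
      ≤ (Real.sqrt (∫ y in Ycell, ∑ i, (a i y) ^ 2)
        + Real.sqrt (∫ y in Ycell, ∑ i, (b i y) ^ 2)) ^ 2 := by
    have h1 : Real.sqrt (∫ y in Ycell, ∑ i, (a i y) ^ 2) ^ 2 = _ := Real.sq_sqrt hA0
    have h2 : Real.sqrt (∫ y in Ycell, ∑ i, (b i y) ^ 2) ^ 2 = _ := Real.sq_sqrt hB0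
    nlinarith [hint, hcsint]
  calc Real.sqrt (∫ y in Ycell, ∑ i, (a i y + b i y) ^ 2)
      ≤ Real.sqrt ((Real.sqrt (∫ y in Ycell, ∑ i, (a i y) ^ 2)
        + Real.sqrt (∫ y in Ycell, ∑ i, (b i y) ^ 2)) ^ 2) := Real.sqrt_le_sqrt key
    _ = _ := Real.sqrt_sq (by positivity)

lemma pdR_formula (j : Fin 3) (Θ Υ Υs : V3 → ℝ) (hΘ : ContDiff ℝ 1 Θ)
    (hΥ : ContDiff ℝ 1 Υ) (hΥs : ContDiff ℝ 1 Υs) (i : Fin 3) (y : V3) :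
    pdR i (fun y => Θ y * Υ y - y j * (1 - Υs y)) y
      = Υ y * pdR i Θ y + (Θ y * pdR i Υ y
        + (y j * pdR i Υs y + (Pi.single i 1 : V3) j * (Υs y - 1))) := by
  have hΘ' : HasFDerivAt Θ (fderiv ℝ Θ y) y := (hΘ.differentiable one_ne_zero y).hasFDerivAt
  have hΥ' : HasFDerivAt Υ (fderiv ℝ Υ y) y := (hΥ.differentiable one_ne_zero y).hasFDerivAt
  have hΥs' : HasFDerivAt Υs (fderiv ℝ Υs y) y := (hΥs.differentiable one_ne_zero y).hasFDerivAt
  have hproj : HasFDerivAt (fun y : V3 => y j)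
      (ContinuousLinearMap.proj j : V3 →L[ℝ] ℝ) y :=
    (ContinuousLinearMap.proj j : V3 →L[ℝ] ℝ).hasFDerivAt
  have h1 := hΘ'.mul hΥ'
  have h2 : HasFDerivAt (fun y : V3 => 1 - Υs y) (-fderiv ℝ Υs y) y := hΥs'.const_sub 1
  have h3 := hproj.mul h2
  have h4 := h1.sub h3
  have : fderiv ℝ (fun y : V3 => Θ y * Υ y - y j * (1 - Υs y)) y = _ := h4.fderiv
  unfold pdR
  rw [this]
  simp only [ContinuousLinearMap.sub_apply, ContinuousLinearMap.add_apply,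
    ContinuousLinearMap.smul_apply, ContinuousLinearMap.neg_apply,
    ContinuousLinearMap.proj_apply, smul_eq_mul]
  ring

end DEC

open DEC in
set_option maxHeartbeats 1000000 in
/-- Dirichlet energy comparison for cut-off modified potentials. -/
theorem dirichlet_energy_comparison
    (j : Fin 3) (Θ : V3 → ℝ) (hΘ : ContDiff ℝ 1 Θ)
    (M : ℝ) (hM : ∀ y ∈ Ycell, |Θ y| ≤ M)
    (A : ℝ) (hA : A = ∫ y in Ycell, ∑ i, (pdR i Θ y) ^ 2)
    (hAfin : IntegrableOn (fun y => ∑ i, (pdR i Θ y) ^ 2) Ycell volume)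
    (Υ Υs : V3 → ℝ) (hΥ : ContDiff ℝ 1 Υ) (hΥs : ContDiff ℝ 1 Υs)
    (hΥb : ∀ y, 0 ≤ Υ y ∧ Υ y ≤ 1) (hΥsb : ∀ y, 0 ≤ Υs y ∧ Υs y ≤ 1)
    (d : ℝ)
    (hd : d = Real.sqrt (∫ y in Ycell, ((1 - Υ y) ^ 2 + ∑ i, (pdR i Υ y) ^ 2))
            + Real.sqrt (∫ y in Ycell, ((1 - Υs y) ^ 2 + ∑ i, (pdR i Υs y) ^ 2)))
    (Θt : V3 → ℝ) (hΘt : Θt = fun y => Θ y * Υ y - y j * (1 - Υs y)) :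
    (∫ y in Ycell, ∑ i, (pdR i Θt y) ^ 2)
        ≤ A + (M + 2) * d * (2 * Real.sqrt A + (M + 2) * d) ∧
    ∀ δ : ℝ, δ ≤ 1 → d ≤ δ →
      (∫ y in Ycell, ∑ i, (pdR i Θt y) ^ 2)
        ≤ (∫ y in Ycell, ∑ i, (pdR i Θ y) ^ 2)
          + (M + 2) * (2 * Real.sqrt A + M + 2) * δ := by
  -- basic positivity facts
  have hM0 : 0 ≤ M := by
    have hy : (fun _ => (1:ℝ)/2) ∈ Ycell := by
      intro i _; constructor <;> norm_num
    exact le_trans (abs_nonneg _) (hM _ hy)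
  have hA0 : 0 ≤ A := hA ▸
    setIntegral_nonneg Ycell_meas fun y _ => Finset.sum_nonneg fun i _ => sq_nonneg _
  set d1 := Real.sqrt (∫ y in Ycell, ((1 - Υ y) ^ 2 + ∑ i, (pdR i Υ y) ^ 2)) with hd1
  set d2 := Real.sqrt (∫ y in Ycell, ((1 - Υs y) ^ 2 + ∑ i, (pdR i Υs y) ^ 2)) with hd2
  have hd1n : 0 ≤ d1 := Real.sqrt_nonneg _
  have hd2n : 0 ≤ d2 := Real.sqrt_nonneg _
  have hdn : 0 ≤ d := by rw [hd]; positivity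
  -- the four pieces of the gradient of Θt
  set a : Fin 3 → V3 → ℝ := fun i y => Υ y * pdR i Θ y with ha
  set b : Fin 3 → V3 → ℝ := fun i y => Θ y * pdR i Υ y with hb
  set c : Fin 3 → V3 → ℝ := fun i y => y j * pdR i Υs y with hc
  set e : Fin 3 → V3 → ℝ := fun i y => (Pi.single i 1 : V3) j * (Υs y - 1) with he
  have hac : ∀ i, Continuous (a i) := fun i => hΥ.continuous.mul (pdR_cont hΘ i)
  have hbc : ∀ i, Continuous (b i) := fun i => hΘ.continuous.mul (pdR_cont hΥ i)
  have hcc : ∀ i, Continuous (c i) := fun i =>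
    (continuous_apply j).mul (pdR_cont hΥs i)
  have hec : ∀ i, Continuous (e i) := fun i =>
    continuous_const.mul (hΥs.continuous.sub continuous_const)
  have hpd : ∀ (i : Fin 3) (y : V3), pdR i Θt y = a i y + (b i y + (c i y + e i y)) := by
    intro i y
    rw [hΘt, pdR_formula j Θ Υ Υs hΘ hΥ hΥs i y]
  -- rewrite the energy of Θt
  have hrw : (∫ y in Ycell, ∑ i, (pdR i Θt y) ^ 2)
      = ∫ y in Ycell, ∑ i, (a i y + (b i y + (c i y + e i y))) ^ 2 := by
    simp only [hpd]
  -- Minkowski chain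
  have hbce : ∀ i, Continuous (fun y => b i y + (c i y + e i y)) := fun i =>
    (hbc i).add ((hcc i).add (hec i))
  have hce : ∀ i, Continuous (fun y => c i y + e i y) := fun i => (hcc i).add (hec i)
  have hmk1 : Real.sqrt (∫ y in Ycell, ∑ i, (a i y + (b i y + (c i y + e i y))) ^ 2)
      ≤ Real.sqrt (∫ y in Ycell, ∑ i, (a i y) ^ 2)
        + Real.sqrt (∫ y in Ycell, ∑ i, (b i y + (c i y + e i y)) ^ 2) :=
    mink a (fun i y => b i y + (c i y + e i y)) hac hbce
  have hmk2 : Real.sqrt (∫ y in Ycell, ∑ i, (b i y + (c i y + e i y)) ^ 2)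
      ≤ Real.sqrt (∫ y in Ycell, ∑ i, (b i y) ^ 2)
        + Real.sqrt (∫ y in Ycell, ∑ i, (c i y + e i y) ^ 2) :=
    mink b (fun i y => c i y + e i y) hbc hce
  have hmk3 : Real.sqrt (∫ y in Ycell, ∑ i, (c i y + e i y) ^ 2)
      ≤ Real.sqrt (∫ y in Ycell, ∑ i, (c i y) ^ 2)
        + Real.sqrt (∫ y in Ycell, ∑ i, (e i y) ^ 2) :=
    mink c e hcc hec
  -- bounds on the four pieces
  have hsa : Real.sqrt (∫ y in Ycell, ∑ i, (a i y) ^ 2) ≤ Real.sqrt A := by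
    rw [hA]
    apply Real.sqrt_le_sqrt
    refine setIntegral_mono_on (integrableOn_Ycell (sum_sq_cont a hac)) hAfin Ycell_meas ?_
    intro y _
    refine Finset.sum_le_sum fun i _ => ?_
    have h1 := (hΥb y).1; have h2 := (hΥb y).2
    simp only [ha]
    have hsq : Υ y ^ 2 ≤ 1 := by nlinarith
    nlinarith [mul_le_mul_of_nonneg_right hsq (sq_nonneg (pdR i Θ y))]
  have hIΥ : IntegrableOn (fun y => (1 - Υ y) ^ 2 + ∑ i, (pdR i Υ y) ^ 2) Ycell volume :=
    integrableOn_Ycell (((continuous_const.sub hΥ.continuous).pow 2).add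
      (sum_sq_cont _ (pdR_cont hΥ)))
  have hIΥs : IntegrableOn (fun y => (1 - Υs y) ^ 2 + ∑ i, (pdR i Υs y) ^ 2) Ycell volume :=
    integrableOn_Ycell (((continuous_const.sub hΥs.continuous).pow 2).add
      (sum_sq_cont _ (pdR_cont hΥs)))
  have hIΥ0 : 0 ≤ ∫ y in Ycell, ((1 - Υ y) ^ 2 + ∑ i, (pdR i Υ y) ^ 2) :=
    setIntegral_nonneg Ycell_meas fun y _ => by positivity
  have hsb : Real.sqrt (∫ y in Ycell, ∑ i, (b i y) ^ 2) ≤ M * d1 := by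
    have hmono : (∫ y in Ycell, ∑ i, (b i y) ^ 2)
        ≤ ∫ y in Ycell, M ^ 2 * ((1 - Υ y) ^ 2 + ∑ i, (pdR i Υ y) ^ 2) := by
      refine setIntegral_mono_on (integrableOn_Ycell (sum_sq_cont b hbc))
        (hIΥ.const_mul _) Ycell_meas ?_
      intro y hy
      have hθ2 : Θ y ^ 2 ≤ M ^ 2 := by
        have := hM y hy
        nlinarith [abs_nonneg (Θ y), sq_abs (Θ y)]
      have hsum0 : (0:ℝ) ≤ ∑ i, (pdR i Υ y) ^ 2 :=
        Finset.sum_nonneg fun i _ => sq_nonneg _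
      have heq : ∑ i, (b i y) ^ 2 = Θ y ^ 2 * ∑ i, (pdR i Υ y) ^ 2 := by
        simp only [hb, mul_pow, Finset.mul_sum]
      rw [heq]
      nlinarith [sq_nonneg (1 - Υ y), sq_nonneg M]
    calc Real.sqrt (∫ y in Ycell, ∑ i, (b i y) ^ 2)
        ≤ Real.sqrt (∫ y in Ycell, M ^ 2 * ((1 - Υ y) ^ 2 + ∑ i, (pdR i Υ y) ^ 2)) :=
          Real.sqrt_le_sqrt hmono
      _ = M * d1 := by
          rw [MeasureTheory.integral_const_mul, Real.sqrt_mul (sq_nonneg M),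
            Real.sqrt_sq hM0, hd1]
  have hsc : Real.sqrt (∫ y in Ycell, ∑ i, (c i y) ^ 2) ≤ d2 := by
    rw [hd2]
    apply Real.sqrt_le_sqrt
    refine setIntegral_mono_on (integrableOn_Ycell (sum_sq_cont c hcc)) hIΥs Ycell_meas ?_
    intro y hy
    have hyj : y j ∈ Set.Ioo (0:ℝ) 1 := hy j (Set.mem_univ j)
    have hsum : ∑ i, (c i y) ^ 2 ≤ ∑ i, (pdR i Υs y) ^ 2 := by
      refine Finset.sum_le_sum fun i _ => ?_
      simp only [hc]
      have hsq : y j ^ 2 ≤ 1 := by nlinarith [hyj.1, hyj.2]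
      nlinarith [mul_le_mul_of_nonneg_right hsq (sq_nonneg (pdR i Υs y))]
    nlinarith [sq_nonneg (1 - Υs y)]
  have hse : Real.sqrt (∫ y in Ycell, ∑ i, (e i y) ^ 2) ≤ d2 := by
    rw [hd2]
    apply Real.sqrt_le_sqrt
    refine setIntegral_mono_on (integrableOn_Ycell (sum_sq_cont e hec)) hIΥs Ycell_meas ?_
    intro y _
    have heq : ∑ i, (e i y) ^ 2 = (1 - Υs y) ^ 2 := by
      have hterm : ∀ i : Fin 3, (e i y) ^ 2 = if j = i then (1 - Υs y) ^ 2 else 0 := by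
        intro i
        simp only [he, Pi.single_apply]
        split_ifs <;> ring
      rw [Finset.sum_congr rfl fun i _ => hterm i, Finset.sum_ite_eq]
      simp
    rw [heq]
    have hs0 : (0:ℝ) ≤ ∑ i, (pdR i Υs y) ^ 2 := Finset.sum_nonneg fun i _ => sq_nonneg _
    linarith
  -- combine
  have hS : Real.sqrt (∫ y in Ycell, ∑ i, (pdR i Θt y) ^ 2)
      ≤ Real.sqrt A + (M + 2) * d := by
    have h1 : Real.sqrt (∫ y in Ycell, ∑ i, (pdR i Θt y) ^ 2)
        ≤ Real.sqrt A + (M * d1 + (d2 + d2)) := by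
      rw [hrw]
      calc Real.sqrt (∫ y in Ycell, ∑ i, (a i y + (b i y + (c i y + e i y))) ^ 2)
          ≤ Real.sqrt (∫ y in Ycell, ∑ i, (a i y) ^ 2)
            + Real.sqrt (∫ y in Ycell, ∑ i, (b i y + (c i y + e i y)) ^ 2) := hmk1
        _ ≤ Real.sqrt A + (M * d1 + (d2 + d2)) := by
            have := hmk2.trans (add_le_add hsb (hmk3.trans (add_le_add hsc hse)))
            exact add_le_add hsa this
    have h2 : M * d1 + (d2 + d2) ≤ (M + 2) * d := by
      rw [hd]
      nlinarith
    linarith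
  have hT0 : 0 ≤ ∫ y in Ycell, ∑ i, (pdR i Θt y) ^ 2 :=
    setIntegral_nonneg Ycell_meas fun y _ => Finset.sum_nonneg fun i _ => sq_nonneg _
  have hsqA : Real.sqrt A ^ 2 = A := Real.sq_sqrt hA0
  have hsA0 : 0 ≤ Real.sqrt A := Real.sqrt_nonneg A
  have main : (∫ y in Ycell, ∑ i, (pdR i Θt y) ^ 2)
      ≤ A + (M + 2) * d * (2 * Real.sqrt A + (M + 2) * d) := by
    have hTsq : (∫ y in Ycell, ∑ i, (pdR i Θt y) ^ 2)
        = Real.sqrt (∫ y in Ycell, ∑ i, (pdR i Θt y) ^ 2) ^ 2 :=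
      (Real.sq_sqrt hT0).symm
    have hbound : Real.sqrt (∫ y in Ycell, ∑ i, (pdR i Θt y) ^ 2) ^ 2
        ≤ (Real.sqrt A + (M + 2) * d) ^ 2 :=
      pow_le_pow_left₀ (Real.sqrt_nonneg _) hS 2
    rw [hTsq]
    nlinarith [hbound]
  refine ⟨main, fun δ hδ1 hdδ => ?_⟩
  have h2 : (M + 2) * d * (2 * Real.sqrt A + (M + 2) * d)
      ≤ (M + 2) * (2 * Real.sqrt A + M + 2) * δ := by
    have hM2 : (0:ℝ) ≤ M + 2 := by linarith
    have hd1' : d ≤ 1 := hdδ.trans hδ1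
    have hδ0 : 0 ≤ δ := hdn.trans hdδ
    have k1 : (M + 2) * d ≤ (M + 2) * δ := mul_le_mul_of_nonneg_left hdδ hM2
    have k2 : 2 * Real.sqrt A + (M + 2) * d ≤ 2 * Real.sqrt A + (M + 2) := by
      have := mul_le_mul_of_nonneg_left hd1' hM2
      linarith
    have k3 : (0:ℝ) ≤ 2 * Real.sqrt A + (M + 2) * d := by
      have := mul_nonneg hM2 hdn
      linarith
    have k4 := mul_le_mul k1 k2 k3 (mul_nonneg hM2 hδ0)
    nlinarith [k4]
  calc (∫ y in Ycell, ∑ i, (pdR i Θt y) ^ 2)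
      ≤ A + (M + 2) * d * (2 * Real.sqrt A + (M + 2) * d) := main
    _ ≤ A + (M + 2) * (2 * Real.sqrt A + M + 2) * δ := by linarith
    _ = (∫ y in Ycell, ∑ i, (pdR i Θ y) ^ 2) + (M + 2) * (2 * Real.sqrt A + M + 2) * δ := by
        rw [hA]
end
end
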